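/- Antichain bound along pure increasing sequences: suppose κ ∈ K, (2^{<θ_κ})⁺ ≤ κ, (s_i : i < i*) is ≤^{pr}_κ-increasing in Q, for each i < i* we have s_i ≤^{apr}_κ t_i, and the t_i are pairwise incompatible in Q. Then i* < (2^{<θ_κ})⁺. -/

import Mathlib

open Cardinal Set

noncomputable section

attribute [local instance] Classical.propDecidable

/-- A forcing condition: a partial `{0,1}`-valued function on ordinals,
coded as an `Option Bool`-valued function. -/
abbrev Cond : Type 1 := Ordinal → Option Bool

/-- The domain of a condition. -/
def cdom (q : Cond) : Set Ordinal := {i | (q i).isSome}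

/-- The `E_κ`-equivalence class of `i` : `j E_κ i` iff `j + κ = i + κ` (ordinal addition). -/
def Ecl (κ : Cardinal) (i : Ordinal) : Set Ordinal := {j | j + κ.ord = i + κ.ord}

/-- The `E_{<κ}`-class of `i`, where `E_{<κ} = id ∪ ⋃ {E_θ : θ ∈ K ∩ κ}`. -/
def EclLt (K : Set Cardinal) (κ : Cardinal) (i : Ordinal) : Set Ordinal :=
  {i} ∪ ⋃ θ ∈ K ∩ Set.Iio κ, Ecl θ i

/-- `θ_κ` : the least regular cardinal `≥ sup((K ∩ κ) ∪ {λ})`. -/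
def theta (lam : Cardinal) (K : Set Cardinal) (κ : Cardinal) : Cardinal :=
  sInf {θ : Cardinal | θ.IsRegular ∧ sSup ((K ∩ Set.Iio κ) ∪ {lam}) ≤ θ}

/-- `A` grows from `X` to `Y` : `∅ ≠ A ∩ X ≠ A ∩ Y`. -/
def grows (A X Y : Set Ordinal) : Prop := (A ∩ X).Nonempty ∧ A ∩ X ≠ A ∩ Y

/-- Membership in the forcing `Q = Q_K`. -/
def inQ (lam mu : Cardinal) (K : Set Cardinal) (q : Cond) : Prop :=
  cdom q ⊆ Set.Iio mu.ord ∧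
    ∀ i < mu.ord, ∀ κ ∈ K, #↥(Ecl κ i ∩ cdom q) < Cardinal.lift.{1} (theta lam K κ)

/-- The set of `E_κ`-classes which grow from `X` to `Y`. -/
def growClasses (mu : Cardinal) (κ : Cardinal) (X Y : Set Ordinal) : Set (Set Ordinal) :=
  {A | (∃ i < mu.ord, A = Ecl κ i) ∧ grows A X Y}

/-- The forcing order: `p ⊆ q` and for each `κ ∈ K`, fewer than `θ_κ` many
`E_κ`-classes grow from `dom p` to `dom q`. -/
def condLe (lam mu : Cardinal) (K : Set Cardinal) (p q : Cond) : Prop :=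
  (∀ i b, p i = some b → q i = some b) ∧
    ∀ κ ∈ K, #↥(growClasses mu κ (cdom p) (cdom q)) < Cardinal.lift.{1} (theta lam K κ)

/-- Pure extension at `κ`: no `E_κ`-class represented in `dom p` grows. -/
def condLePr (lam mu : Cardinal) (K : Set Cardinal) (κ : Cardinal) (p q : Cond) : Prop :=
  condLe lam mu K p q ∧ ∀ i : Ordinal, ¬ grows (Ecl κ i) (cdom p) (cdom q)

/-- Apure extension at `κ`: no new `E_κ`-classes are represented in `dom q`. -/
def condLeApr (lam mu : Cardinal) (K : Set Cardinal) (κ : Cardinal) (p q : Cond) : Prop :=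
  condLe lam mu K p q ∧ ∀ i ∈ cdom q, (Ecl κ i ∩ cdom p).Nonempty

/-- Union of two conditions (as partial functions, left priority). -/
def unionC (p q : Cond) : Cond := fun i => (p i).orElse (fun _ => q i)

/-- Restriction of a condition to a set of ordinals. -/
def restrictC (q : Cond) (X : Set Ordinal) : Cond := fun ξ => if ξ ∈ X then q ξ else none

/-- Union of a family of conditions indexed by ordinals below `θo`. -/
def unionFam (f : Ordinal → Cond) (θo : Ordinal) : Cond :=
  fun ξ => if h : ∃ i, i < θo ∧ (f i ξ).isSome then f h.choose ξ else none

/-- Compatibility in `Q`: existence of a common upper bound in `Q`. -/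
def compatQ (lam mu : Cardinal) (K : Set Cardinal) (q₁ q₂ : Cond) : Prop :=
  ∃ r : Cond, inQ lam mu K r ∧ condLe lam mu K q₁ r ∧ condLe lam mu K q₂ r

/-- Standing ground-model hypotheses: `λ = λ^{<λ}` regular, `μ = μ^λ` regular,
`K ⊆ [λ, μ]` a set of regular cardinals with `λ, μ ∈ K`. -/
def GroundCtx (lam mu : Cardinal) (K : Set Cardinal) : Prop :=
  lam.IsRegular ∧ lam ^< lam = lam ∧ mu.IsRegular ∧ mu ^ lam = mu ∧
    (∀ κ ∈ K, κ.IsRegular ∧ lam ≤ κ ∧ κ ≤ mu) ∧ lam ∈ K ∧ mu ∈ K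



lemma small_bdd {o : Ordinal.{0}} {S : Set Ordinal.{0}}
    (hS : #↥S < Cardinal.lift.{1} o.cof) (hb : ∀ x ∈ S, x < o) :
    ∃ β < o, ∀ x ∈ S, x ≤ β := by
  rcases S.eq_empty_or_nonempty with rfl | hne
  · refine ⟨0, ?_, by simp⟩
    rcases eq_zero_or_pos o with rfl | hpos
    · simp at hS
    · exact hpos
  · let e := Ordinal.ToType.mk (o := o)
    let S' : Set o.ToType := {y | ((e.symm y : Iio o) : Ordinal) ∈ S}
    have hS' : #↥S' < o.cof := by
      have h1 : Cardinal.lift.{1} #↥S' ≤ #↥S := by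
        have h2 : Nonempty (↥S' ↪ ↥S) := by
          refine ⟨⟨fun y => ⟨((e.symm y.1 : Iio o) : Ordinal), y.2⟩, ?_⟩⟩
          intro y₁ y₂ h
          simp only [Subtype.mk.injEq] at h
          have h3 : (e.symm y₁.1 : Iio o) = (e.symm y₂.1 : Iio o) := Subtype.ext h
          exact Subtype.ext (e.symm.injective h3)
        have := Cardinal.lift_mk_le'.{0,1}.mpr h2
        simpa using this
      have := lt_of_le_of_lt h1 hS
      rwa [Cardinal.lift_lt] at this
    have hlt : (⨆ y : ↥S', ((e.symm y.1 : Iio o) : Ordinal)) < o :=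
      Ordinal.iSup_lt_ord hS' (fun y => (e.symm y.1).2)
    refine ⟨_, hlt, fun x hx => ?_⟩
    have hxo : x < o := hb x hx
    have hmem : e ⟨x, hxo⟩ ∈ S' := by
      simp only [S', mem_setOf_eq, OrderIso.symm_apply_apply]
      exact hx
    have := le_ciSup (Ordinal.bddAbove_range
      (fun y : ↥S' => ((e.symm y.1 : Iio o) : Ordinal))) (⟨_, hmem⟩ : ↥S')
    simpa using this

lemma pow_le_self_of_lt_cof {x ν : Cardinal.{0}} (hx : ℵ₀ ≤ x) (hν : ν < x.ord.cof)
    (hy : ∀ y < x, y ^ ν ≤ x) : x ^ ν ≤ x := by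
  have hmkX : #↥(Iio x.ord) = Cardinal.lift.{1} x := by
    rw [Ordinal.mk_Iio_ordinal, Cardinal.card_ord]
  have hmkA : #(ULift.{1,0} ν.out) = Cardinal.lift.{1} ν := by
    rw [Cardinal.mk_uLift, Cardinal.mk_out]
  have key : #(ULift.{1,0} ν.out → ↥(Iio x.ord)) ≤ Cardinal.lift.{1} x := by
    set F : (Σ γ : ↥(Iio x.ord), (ULift.{1,0} ν.out → ↥(Iio γ.1))) →
        (ULift.{1,0} ν.out → ↥(Iio x.ord)) :=
      fun p => fun i => ⟨(p.2 i).1, mem_Iio.mpr (lt_trans (mem_Iio.mp (p.2 i).2) (mem_Iio.mp p.1.2))⟩ with hF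
    have hsurj : Function.Surjective F := by
      intro f
      -- bound the range of f
      obtain ⟨β, hβo, hβ⟩ := small_bdd (S := range (fun i => (f i : Ordinal)))
        (lt_of_le_of_lt (Cardinal.mk_range_le) (by rw [hmkA]; exact Cardinal.lift_lt.mpr hν))
        (by rintro _ ⟨i, rfl⟩; exact (f i).2)
      have hsβ : β + 1 < x.ord := (Cardinal.isSuccLimit_ord hx).succ_lt hβo
      refine ⟨⟨⟨β + 1, hsβ⟩, fun i => ⟨(f i : Ordinal), ?_⟩⟩, ?_⟩
      · have : (f i : Ordinal) ≤ β := hβ _ ⟨i, rfl⟩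
        exact lt_of_le_of_lt this (Order.lt_succ_iff.mpr le_rfl)
      · funext i; rfl
    calc #(ULift.{1,0} ν.out → ↥(Iio x.ord)) ≤ #(Σ γ : ↥(Iio x.ord), (ULift.{1,0} ν.out → ↥(Iio γ.1))) :=
          Cardinal.mk_le_of_surjective hsurj
      _ = Cardinal.sum (fun γ : ↥(Iio x.ord) => #(ULift.{1,0} ν.out → ↥(Iio γ.1))) := Cardinal.mk_sigma _
      _ ≤ Cardinal.sum (fun _ : ↥(Iio x.ord) => Cardinal.lift.{1} x) := by
          refine Cardinal.sum_le_sum _ _ (fun γ => ?_)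
          have h1 : #(ULift.{1,0} ν.out → ↥(Iio γ.1)) = #↥(Iio γ.1) ^ #(ULift.{1,0} ν.out) :=
            (Cardinal.power_def _ _).symm
          rw [h1, hmkA, Ordinal.mk_Iio_ordinal, ← Cardinal.lift_power]
          exact Cardinal.lift_le.mpr (hy _ (Cardinal.lt_ord.mp γ.2))
      _ = #↥(Iio x.ord) * Cardinal.lift.{1} x := Cardinal.sum_const' _ _
      _ = Cardinal.lift.{1} x := by
          rw [hmkX, ← Cardinal.lift_mul, Cardinal.mul_eq_self hx]
  have : #(ULift.{1,0} ν.out → ↥(Iio x.ord)) = Cardinal.lift.{1} (x ^ ν) := by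
    rw [← Cardinal.power_def, hmkX, hmkA, ← Cardinal.lift_power]
  rw [this] at key
  exact Cardinal.lift_le.mp key

lemma isRegular_lift {c : Cardinal.{0}} (h : c.IsRegular) :
    (Cardinal.lift.{1} c).IsRegular := by
  constructor
  · exact Cardinal.aleph0_le_lift.mpr h.1
  · rw [← Cardinal.lift_ord, ← Ordinal.lift_cof]
    exact Cardinal.lift_le.mpr h.2

lemma chi_pow_le {θ ν : Cardinal.{0}} (hθ : θ.IsRegular) (hν : ν < θ) :
    (2 ^< θ) ^ ν ≤ 2 ^< θ := by
  set χ := 2 ^< θ with hχ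
  have hθχ : θ ≤ χ := by
    refine le_of_forall_lt (fun c hc => ?_)
    exact lt_of_lt_of_le (Cardinal.cantor c) (Cardinal.le_powerlt 2 hc)
  have hχinf : ℵ₀ ≤ χ := le_trans hθ.1 hθχ
  by_cases hA : ∃ c < θ, χ ≤ 2 ^ c
  · obtain ⟨c, hc, hle⟩ := hA
    have hEq : χ = 2 ^ c := le_antisymm hle (Cardinal.le_powerlt 2 hc)
    calc χ ^ ν = 2 ^ (c * ν) := by rw [hEq, ← Cardinal.power_mul]
      _ ≤ χ := Cardinal.le_powerlt 2 (Cardinal.mul_lt_of_lt hθ.1 hc hν)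
  · push_neg at hA
    have hcov : ∀ y < χ, ∃ c < θ, y ≤ 2 ^ c := by
      intro y hy
      by_contra h
      push_neg at h
      exact absurd (Cardinal.powerlt_le.mpr (fun c hc => (h c hc).le)) (not_le.mpr hy)
    have hcof : ν < χ.ord.cof := by
      by_contra hcof
      push_neg at hcof
      obtain ⟨ι, f, hlsub, hmkι⟩ := Ordinal.exists_lsub_cof χ.ord
      have hι : #ι < θ := lt_of_le_of_lt (hmkι ▸ hcof) hν
      have hchoice : ∀ i : ι, ∃ c < θ, (f i).card ≤ 2 ^ c := by
        intro i
        apply hcov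
        rw [← Cardinal.lt_ord, ← hlsub]
        exact Ordinal.lt_lsub f i
      choose cf hcf1 hcf2 using hchoice
      have hsup : (⨆ i, cf i) < θ := Cardinal.iSup_lt_of_isRegular hθ hι hcf1
      set c' := ⨆ i, cf i with hc'
      have hbound : ∀ i, (f i).card ≤ 2 ^ c' := fun i =>
        (hcf2 i).trans (Cardinal.power_le_power_left two_ne_zero
          (le_ciSup (Cardinal.bddAbove_range cf) i))
      have hχle : χ ≤ Order.succ (2 ^ c') := by
        rw [← Cardinal.ord_le_ord, ← hlsub]
        refine Ordinal.lsub_le (fun i => ?_)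
        rw [Cardinal.lt_ord]
        exact lt_of_le_of_lt (hbound i) (Order.lt_succ _)
      have h2inf : ℵ₀ ≤ 2 ^ c' := by
        by_contra hfin
        push_neg at hfin
        have : Order.succ (2 ^ c') < ℵ₀ := by
          obtain ⟨n, hn⟩ := Cardinal.lt_aleph0.mp hfin
          rw [hn, Cardinal.succ_natCast]
          exact_mod_cast Cardinal.nat_lt_aleph0 (n+1)
        exact absurd (le_trans hχinf hχle) (not_le.mpr this)
      have hreg : χ.IsRegular := by
        have hEq : χ = Order.succ (2 ^ c') :=
          le_antisymm hχle (Order.succ_le_of_lt (hA c' hsup))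
        rw [hEq]
        exact Cardinal.isRegular_succ h2inf
      have : χ ≤ ν := hreg.cof_eq ▸ hcof
      exact absurd hν (not_lt.mpr (le_trans hθχ this))
    exact pow_le_self_of_lt_cof hχinf hcof (fun y hy => by
      obtain ⟨c, hc, hyc⟩ := hcov y hy
      calc y ^ ν ≤ (2 ^ c) ^ ν := Cardinal.power_le_power_right hyc
        _ = 2 ^ (c * ν) := by rw [← Cardinal.power_mul]
        _ ≤ χ := Cardinal.le_powerlt 2 (Cardinal.mul_lt_of_lt hθ.1 hc hν))
/-- cardinality of a bounded-size bounded union. -/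
lemma biUnion_card_le {A : Ordinal → Set Ordinal} {s : Set Ordinal} {c M : Cardinal.{1}}
    (hs : #↥s ≤ c) (hA : ∀ i ∈ s, #↥(A i) ≤ M) :
    #↥(⋃ x ∈ s, A x) ≤ c * M := by
  rcases isEmpty_or_nonempty ↥s with he | hne
  · have : s = ∅ := Set.isEmpty_coe_sort.mp he
    simp [this]
  · refine le_trans (Cardinal.mk_biUnion_le A s) (mul_le_mul' hs ?_)
    exact ciSup_le' (fun x => hA x.1 x.2)

lemma biUnion_card_le' {ι : Type 1} {A : ι → Set Ordinal} {s : Set ι} {c M : Cardinal.{1}}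
    (hs : #↥s ≤ c) (hA : ∀ i ∈ s, #↥(A i) ≤ M) :
    #↥(⋃ x ∈ s, A x) ≤ c * M := by
  rcases isEmpty_or_nonempty ↥s with he | hne
  · have : s = ∅ := Set.isEmpty_coe_sort.mp he
    simp [this]
  · refine le_trans (Cardinal.mk_biUnion_le A s) (mul_le_mul' hs ?_)
    exact ciSup_le' (fun x => hA x.1 x.2)

/-- counting small subsets (with proofs) of a `≤ χ`-sized set of ordinals. -/
lemma count_small {U : Set Ordinal} {θ χ : Cardinal.{0}} (hθreg : θ.IsRegular) (hθχ : θ ≤ χ)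
    (hχ : ℵ₀ ≤ χ) (hpow : ∀ ν < θ, χ ^ ν ≤ χ) (hU : #↥U ≤ Cardinal.lift.{1} χ) :
    #{T : Set Ordinal // T ⊆ U ∧ #↥T < Cardinal.lift.{1} θ} ≤ Cardinal.lift.{1} χ := by
  classical
  set Tgt := {T : Set Ordinal // T ⊆ U ∧ #↥T < Cardinal.lift.{1} θ} with hTgt
  set Sig := Σ ν : ↥(Iio θ.ord), {T : Set Ordinal // T ⊆ U ∧ #↥T ≤ Cardinal.lift.{1} ν.1.card}
    with hSig
  have hJ : ∃ J : Tgt → Sig, Function.Injective J := by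
    have hch : ∀ T : Tgt, ∃ ν : ↥(Iio θ.ord), #↥T.1 ≤ Cardinal.lift.{1} ν.1.card := by
      intro T
      obtain ⟨c, hc, hlc⟩ := Cardinal.lt_lift_iff.mp T.2.2
      refine ⟨⟨c.ord, ?_⟩, ?_⟩
      · exact Cardinal.ord_lt_ord.mpr hc
      · rw [Cardinal.card_ord, hlc]
    choose ν hν using hch
    refine ⟨fun T => ⟨ν T, ⟨T.1, T.2.1, hν T⟩⟩, ?_⟩
    intro T₁ T₂ h
    have h2 : T₁.1 = T₂.1 := congrArg (fun p : Sig => p.2.1) h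
    exact Subtype.ext h2
  obtain ⟨J, hJinj⟩ := hJ
  refine le_trans (Cardinal.mk_le_of_injective hJinj) ?_
  have hmkIio : #↥(Iio θ.ord) ≤ Cardinal.lift.{1} χ := by
    rw [Ordinal.mk_Iio_ordinal, Cardinal.card_ord]
    exact Cardinal.lift_le.mpr hθχ
  calc #Sig = Cardinal.sum (fun ν : ↥(Iio θ.ord) =>
        #{T : Set Ordinal // T ⊆ U ∧ #↥T ≤ Cardinal.lift.{1} ν.1.card}) := Cardinal.mk_sigma _
    _ ≤ Cardinal.sum (fun _ : ↥(Iio θ.ord) => Cardinal.lift.{1} χ) := by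
        refine Cardinal.sum_le_sum _ _ (fun ν => ?_)
        refine le_trans (Cardinal.mk_bounded_subset_le U (Cardinal.lift.{1} ν.1.card)) ?_
        have h1 : #↥U ⊔ ℵ₀ ≤ Cardinal.lift.{1} χ := by
          refine sup_le hU ?_
          rw [← Cardinal.lift_aleph0.{1,0}]
          exact Cardinal.lift_le.mpr hχ
        refine le_trans (Cardinal.power_le_power_right h1) ?_
        rw [← Cardinal.lift_power]
        exact Cardinal.lift_le.mpr (hpow _ (Cardinal.lt_ord.mp ν.2))
    _ = #↥(Iio θ.ord) * Cardinal.lift.{1} χ := Cardinal.sum_const' _ _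
    _ ≤ Cardinal.lift.{1} χ * Cardinal.lift.{1} χ := mul_le_mul' hmkIio le_rfl
    _ = Cardinal.lift.{1} χ := Cardinal.mul_eq_self (Cardinal.aleph0_le_lift.mpr hχ)

/-- pigeonhole: a map on a big set with a small codomain has a big fiber. -/
lemma big_fiber {V : Type 1} {S : Set Ordinal} {χ' : Cardinal.{1}} (hχ' : ℵ₀ ≤ χ')
    (hS : χ' < #↥S) (F : Ordinal → V) (hV : #V ≤ χ') :
    ∃ v : V, χ' < #↥{a | a ∈ S ∧ F a = v} := by
  by_contra h
  push_neg at h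
  have hsub : S ⊆ ⋃ v : V, {a | a ∈ S ∧ F a = v} := by
    intro a ha
    exact mem_iUnion.mpr ⟨F a, ha, rfl⟩
  have : #↥S ≤ χ' := by
    refine le_trans (Cardinal.mk_le_mk_of_subset hsub) ?_
    refine le_trans (Cardinal.mk_iUnion_le _) ?_
    calc #V * (⨆ v : V, #↥{a | a ∈ S ∧ F a = v}) ≤ χ' * χ' := by
          refine mul_le_mul' hV (ciSup_le' (fun v => h v))
      _ = χ' := Cardinal.mul_eq_self hχ'
  exact absurd hS (not_lt.mpr this)

lemma two_elements {T : Set Ordinal} {χ' : Cardinal.{1}} (h1 : 1 ≤ χ') (hT : χ' < #↥T) :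
    ∃ a ∈ T, ∃ b ∈ T, a < b := by
  have : 1 < #↥T := lt_of_le_of_lt h1 hT
  have hnt : Nontrivial ↥T := Cardinal.one_lt_iff_nontrivial.mp this
  obtain ⟨a, b, hab⟩ := hnt.exists_pair_ne
  have hne : (a : Ordinal) ≠ b := fun h => hab (Subtype.ext h)
  rcases hne.lt_or_gt with h | h
  · exact ⟨a, a.2, b, b.2, h⟩
  · exact ⟨b, b.2, a, a.2, h⟩
/-- Δ-system lemma tailored to our setting. -/
lemma delta_system {θ χ : Cardinal.{0}} (hθ : θ.IsRegular) (hθχ : θ ≤ χ) (hχ : ℵ₀ ≤ χ)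
    (hpow : ∀ ν < θ, χ ^ ν ≤ χ) (G : Ordinal → Set Ordinal)
    (hG : ∀ α, #↥(G α) < Cardinal.lift.{1} θ) :
    ∃ (T R : Set Ordinal), T ⊆ Iio (Order.succ χ).ord ∧ Cardinal.lift.{1} χ < #↥T ∧
      ∀ α ∈ T, ∀ β ∈ T, α ≠ β → G α ∩ G β = R := by
  classical
  set N := Order.succ χ with hNdef
  have hN : N.IsRegular := Cardinal.isRegular_succ hχ
  set NO := N.ord with hNOdef
  have hNlim : Order.IsSuccLimit NO := Cardinal.isSuccLimit_ord hN.1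
  have hcofN : NO.cof = N := hN.cof_eq
  have hχN : χ < N := Order.lt_succ χ
  have hliftχN : Cardinal.lift.{1} χ < Cardinal.lift.{1} N := Cardinal.lift_lt.mpr hχN
  have hθχ' : Cardinal.lift.{1} θ ≤ Cardinal.lift.{1} χ := Cardinal.lift_le.mpr hθχ
  set birth : Ordinal → Ordinal := fun x => sInf {γ | γ < NO ∧ x ∈ G γ} with hbirthdef
  have hbirth : ∀ {x γ}, γ < NO → x ∈ G γ →
      birth x < NO ∧ x ∈ G (birth x) ∧ birth x ≤ γ := by
    intro x γ hγ hx
    have hne : {γ | γ < NO ∧ x ∈ G γ}.Nonempty := ⟨γ, hγ, hx⟩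
    have hmem := csInf_mem hne
    exact ⟨hmem.1, hmem.2, csInf_le (OrderBot.bddBelow _) ⟨hγ, hx⟩⟩
  set P : Ordinal → Set Ordinal := fun α => G α ∩ ⋃ γ ∈ Iio α, G γ with hPdef
  have hPsize : ∀ α, #↥(P α) < Cardinal.lift.{1} θ := fun α =>
    lt_of_le_of_lt (Cardinal.mk_le_mk_of_subset inter_subset_left) (hG α)
  set fb : Ordinal → Ordinal := fun α => sSup ((fun x => birth x + 1) '' P α) with hfbdef
  have hPbirth : ∀ {α x}, α ≤ NO → x ∈ P α → birth x < α ∧ x ∈ G (birth x) := by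
    intro α x hα hx
    obtain ⟨hxG, hxU⟩ := hx
    rw [mem_iUnion₂] at hxU
    obtain ⟨γ, hγα, hxγ⟩ := hxU
    have hγNO : γ < NO := lt_of_lt_of_le hγα hα
    obtain ⟨h1, h2, h3⟩ := hbirth hγNO hxγ
    exact ⟨lt_of_le_of_lt h3 hγα, h2⟩
  have hfb_ge : ∀ {α x}, α ≤ NO → x ∈ P α → birth x + 1 ≤ fb α := by
    intro α x hα hx
    refine le_csSup ⟨NO, ?_⟩ (mem_image_of_mem _ hx)
    rintro o ⟨y, hy, rfl⟩
    dsimp only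
    rw [Ordinal.add_one_eq_succ, Order.succ_le_iff]
    exact lt_of_lt_of_le (hPbirth hα hy).1 hα
  have hfb_lt : ∀ α < NO, fb α < NO := by
    intro α hα
    obtain ⟨β, hβ, hbd⟩ := small_bdd (o := NO)
      (S := (fun x => birth x + 1) '' P α)
      (by
        rw [hcofN]
        exact lt_of_le_of_lt (Cardinal.mk_image_le) (lt_of_lt_of_le (hPsize α)
          (le_of_lt (lt_of_le_of_lt hθχ' hliftχN))))
      (by
        rintro _ ⟨y, hy, rfl⟩
        dsimp only
        rw [Ordinal.add_one_eq_succ]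
        exact hNlim.succ_lt (lt_trans (hPbirth (le_of_lt hα) hy).1 hα))
    exact lt_of_le_of_lt (csSup_le' (fun o ho => hbd o ho)) hβ
  have key : ∃ β, β < NO ∧ Cardinal.lift.{1} χ < #↥{α | α < NO ∧ fb α ≤ β} := by
    by_contra hk
    push_neg at hk
    set H : Ordinal → Ordinal := fun β => sSup ((fun α => α + 1) '' {α | α < NO ∧ fb α ≤ β})
      with hHdef
    have hH_lt : ∀ β < NO, H β < NO := by
      intro β hβ
      obtain ⟨b, hb, hbd⟩ := small_bdd (o := NO)
        (S := (fun α => α + 1) '' {α | α < NO ∧ fb α ≤ β})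
        (by
          rw [hcofN]
          exact lt_of_le_of_lt Cardinal.mk_image_le (lt_of_le_of_lt (hk β hβ) hliftχN))
        (by
          rintro _ ⟨a, ha, rfl⟩
          dsimp only
          rw [Ordinal.add_one_eq_succ]
          exact hNlim.succ_lt ha.1)
      exact lt_of_le_of_lt (csSup_le' (fun o ho => hbd o ho)) hb
    have hH_mono : ∀ {β β'}, β ≤ β' → H β ≤ H β' := by
      intro β β' hle
      rcases Set.eq_empty_or_nonempty ((fun α => α + 1) '' {α | α < NO ∧ fb α ≤ β}) with he | hne
      · show sSup _ ≤ _
        rw [he, csSup_empty]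
        exact zero_le
      · refine csSup_le_csSup ⟨NO, ?_⟩ hne (image_mono (fun a ha => ⟨ha.1, le_trans ha.2 hle⟩))
        rintro o ⟨a, ha, rfl⟩
        dsimp only
        rw [Ordinal.add_one_eq_succ]
        exact le_of_lt (hNlim.succ_lt ha.1)
    set γs : Ordinal → Ordinal := Ordinal.lt_wf.fix
      (fun ξ IH => sSup {o | ∃ ζ, ∃ h : ζ < ξ, o = max (H (IH ζ h)) (IH ζ h) + 1}) with hγdef
    have hγeq : ∀ ξ, γs ξ = sSup ((fun ζ => max (H (γs ζ)) (γs ζ) + 1) '' Iio ξ) := by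
      intro ξ
      rw [hγdef]
      rw [WellFounded.fix_eq]
      congr 1
      ext o
      constructor
      · rintro ⟨ζ, h, rfl⟩; exact ⟨ζ, h, rfl⟩
      · rintro ⟨ζ, h, rfl⟩; exact ⟨ζ, h, rfl⟩
    have hγ_lt : ∀ ξ, ξ ≤ θ.ord → γs ξ < NO := by
      intro ξ
      induction ξ using Ordinal.induction with
      | _ ξ IH =>
        intro hξ
        obtain ⟨b, hb, hbd⟩ := small_bdd (o := NO)
          (S := (fun ζ => max (H (γs ζ)) (γs ζ) + 1) '' Iio ξ)
          (by
            rw [hcofN]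
            refine lt_of_le_of_lt Cardinal.mk_image_le ?_
            rw [Ordinal.mk_Iio_ordinal]
            refine lt_of_le_of_lt ?_ hliftχN
            refine le_trans (Cardinal.lift_le.mpr ?_) hθχ'
            exact le_trans (Ordinal.card_le_card hξ) (le_of_eq (Cardinal.card_ord θ)))
          (by
            rintro _ ⟨ζ, hζ, rfl⟩
            dsimp only
            have hγζ : γs ζ < NO := IH ζ hζ (le_of_lt (lt_of_lt_of_le hζ hξ))
            have h1 : max (H (γs ζ)) (γs ζ) < NO := max_lt (hH_lt _ hγζ) hγζ
            rw [Ordinal.add_one_eq_succ]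
            exact hNlim.succ_lt h1)
        rw [hγeq ξ]
        exact lt_of_le_of_lt (csSup_le' (fun o ho => hbd o ho)) hb
    have hbddimg : ∀ ξ, ξ ≤ θ.ord →
        BddAbove ((fun ζ => max (H (γs ζ)) (γs ζ) + 1) '' Iio ξ) := by
      intro ξ hξ
      refine ⟨NO, ?_⟩
      rintro o ⟨z, hz, rfl⟩
      dsimp only
      have hγz : γs z < NO := hγ_lt z (le_of_lt (lt_of_lt_of_le hz hξ))
      rw [Ordinal.add_one_eq_succ]
      exact le_of_lt (hNlim.succ_lt (max_lt (hH_lt _ hγz) hγz))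
    have hγ_mono : ∀ {ζ ξ}, ζ < ξ → ξ ≤ θ.ord → γs ζ < γs ξ := by
      intro ζ ξ hζξ hξ
      have h2 : max (H (γs ζ)) (γs ζ) + 1 ≤ γs ξ := by
        rw [hγeq ξ]
        exact le_csSup (hbddimg ξ hξ) (mem_image_of_mem _ hζξ)
      refine lt_of_lt_of_le ?_ h2
      refine lt_of_le_of_lt (le_max_right (H (γs ζ)) (γs ζ)) ?_
      rw [Ordinal.add_one_eq_succ]
      exact Order.lt_succ _
    have hγ_mono' : ∀ {ζ ξ}, ζ ≤ ξ → ξ ≤ θ.ord → γs ζ ≤ γs ξ := by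
      intro ζ ξ h hξ
      rcases eq_or_lt_of_le h with rfl | h
      · exact le_rfl
      · exact le_of_lt (hγ_mono h hξ)
    set δ := sSup (γs '' Iio θ.ord) with hδdef
    have hθone : (0 : Ordinal) < θ.ord := by
      rw [Cardinal.lt_ord]
      simpa using lt_of_lt_of_le Cardinal.aleph0_pos hθ.1
    have hθlim : Order.IsSuccLimit θ.ord := Cardinal.isSuccLimit_ord hθ.1
    have himg_ne : (γs '' Iio θ.ord).Nonempty := ⟨γs 0, mem_image_of_mem _ hθone⟩
    have hbddδ : BddAbove (γs '' Iio θ.ord) := by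
      refine ⟨NO, ?_⟩
      rintro o ⟨z, hz, rfl⟩
      exact le_of_lt (hγ_lt z (le_of_lt hz))
    have hδNO : δ < NO := by
      obtain ⟨b, hb, hbd⟩ := small_bdd (o := NO) (S := γs '' Iio θ.ord)
        (by
          rw [hcofN]
          refine lt_of_le_of_lt Cardinal.mk_image_le ?_
          rw [Ordinal.mk_Iio_ordinal, Cardinal.card_ord]
          exact lt_of_le_of_lt hθχ' hliftχN)
        (by rintro _ ⟨z, hz, rfl⟩; exact hγ_lt z (le_of_lt hz))
      exact lt_of_le_of_lt (csSup_le' (fun o ho => hbd o ho)) hb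
    have hδH : ∀ β < δ, H β ≤ δ := by
      intro β hβ
      obtain ⟨o, ⟨ζ, hζ, rfl⟩, hβo⟩ := (lt_csSup_iff hbddδ himg_ne).mp hβ
      have hζ1 : ζ + 1 < θ.ord := by
        rw [Ordinal.add_one_eq_succ]; exact hθlim.succ_lt hζ
      have h1 : H β ≤ H (γs ζ) := hH_mono (le_of_lt hβo)
      have h2 : H (γs ζ) ≤ max (H (γs ζ)) (γs ζ) + 1 := by
        have h2' : max (H (γs ζ)) (γs ζ) ≤ max (H (γs ζ)) (γs ζ) + 1 := by
          rw [Ordinal.add_one_eq_succ]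
          exact le_of_lt (Order.lt_succ _)
        exact le_trans (le_max_left _ _) h2'
      have h3 : max (H (γs ζ)) (γs ζ) + 1 ≤ γs (ζ + 1) := by
        rw [hγeq (ζ + 1)]
        refine le_csSup (hbddimg _ (le_of_lt hζ1)) (mem_image_of_mem _ ?_)
        rw [mem_Iio, Ordinal.add_one_eq_succ]
        exact Order.lt_succ ζ
      have h4 : γs (ζ + 1) ≤ δ := le_csSup hbddδ (mem_image_of_mem _ hζ1)
      exact le_trans h1 (le_trans h2 (le_trans h3 h4))
    have hfbδ : fb δ < δ := by
      have hz : ∀ x ∈ P δ, ∃ z, z < θ.ord ∧ birth x < γs z := by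
        intro x hx
        have hb1 : birth x < δ := (hPbirth (le_of_lt hδNO) hx).1
        obtain ⟨o, ⟨ζ, hζ, rfl⟩, ho⟩ := (lt_csSup_iff hbddδ himg_ne).mp hb1
        exact ⟨ζ, hζ, ho⟩
      set zf : Ordinal → Ordinal := fun x => sInf {z | z < θ.ord ∧ birth x < γs z} with hzf
      have hzf_mem : ∀ x ∈ P δ, zf x < θ.ord ∧ birth x < γs (zf x) := by
        intro x hx
        obtain ⟨z, hz1, hz2⟩ := hz x hx
        have hmem : zf x ∈ {z | z < θ.ord ∧ birth x < γs z} := csInf_mem ⟨z, hz1, hz2⟩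
        exact hmem
      obtain ⟨ζst, hζst, hbd⟩ := small_bdd (o := θ.ord) (S := zf '' P δ)
        (by
          have : Cardinal.lift.{1} θ.ord.cof = Cardinal.lift.{1} θ := by
            rw [hθ.cof_eq]
          rw [this]
          exact lt_of_le_of_lt Cardinal.mk_image_le (hPsize δ))
        (by rintro _ ⟨x, hx, rfl⟩; exact (hzf_mem x hx).1)
      have hub : ∀ o ∈ (fun x => birth x + 1) '' P δ, o ≤ γs ζst := by
        rintro _ ⟨x, hx, rfl⟩
        dsimp only
        have h1 : birth x < γs (zf x) := (hzf_mem x hx).2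
        have h2 : γs (zf x) ≤ γs ζst := hγ_mono' (hbd _ (mem_image_of_mem _ hx)) (le_of_lt hζst)
        rw [Ordinal.add_one_eq_succ, Order.succ_le_iff]
        exact lt_of_lt_of_le h1 h2
      have h3 : fb δ ≤ γs ζst := csSup_le' hub
      have hζst1 : ζst + 1 < θ.ord := by
        rw [Ordinal.add_one_eq_succ]; exact hθlim.succ_lt hζst
      calc fb δ ≤ γs ζst := h3
        _ < γs (ζst + 1) := by
            refine hγ_mono ?_ (le_of_lt hζst1)
            rw [Ordinal.add_one_eq_succ]
            exact Order.lt_succ _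
        _ ≤ δ := le_csSup hbddδ (mem_image_of_mem _ hζst1)
    have hδmem : δ ∈ {α | α < NO ∧ fb α ≤ fb δ} := ⟨hδNO, le_rfl⟩
    have h1 : δ + 1 ≤ H (fb δ) := by
      refine le_csSup ⟨NO, ?_⟩ (mem_image_of_mem _ hδmem)
      rintro _ ⟨a, ha, rfl⟩
      dsimp only
      rw [Ordinal.add_one_eq_succ]
      exact le_of_lt (hNlim.succ_lt ha.1)
    have h2 : H (fb δ) ≤ δ := hδH _ hfbδ
    have h3 : δ + 1 ≤ δ := le_trans h1 h2
    rw [Ordinal.add_one_eq_succ] at h3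
    exact absurd (lt_of_lt_of_le (Order.lt_succ δ) h3) (lt_irrefl δ)
  obtain ⟨βs, hβsNO, hbig⟩ := key
  set Ustar := ⋃ γ ∈ Iio βs, G γ with hUdef
  have hUsize : #↥Ustar ≤ Cardinal.lift.{1} χ := by
    refine le_trans (biUnion_card_le (A := G) (s := Iio βs)
      (c := Cardinal.lift.{1} χ) (M := Cardinal.lift.{1} χ) ?_ ?_) ?_
    · rw [Ordinal.mk_Iio_ordinal]
      refine Cardinal.lift_le.mpr ?_
      have hcard : (βs).card < N := Cardinal.lt_ord.mp hβsNO
      rw [hNdef] at hcard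
      exact Order.lt_succ_iff.mp hcard
    · exact fun i _ => le_of_lt (lt_of_lt_of_le (hG i) hθχ')
    · rw [Cardinal.mul_eq_self (Cardinal.aleph0_le_lift.mpr hχ)]
  set F : Ordinal → {T : Set Ordinal // T ⊆ Ustar ∧ #↥T < Cardinal.lift.{1} θ} :=
    fun α => ⟨G α ∩ Ustar, inter_subset_right,
      lt_of_le_of_lt (Cardinal.mk_le_mk_of_subset inter_subset_left) (hG α)⟩ with hFdef
  have hVle : #{T : Set Ordinal // T ⊆ Ustar ∧ #↥T < Cardinal.lift.{1} θ} ≤ Cardinal.lift.{1} χ :=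
    count_small hθ hθχ hχ hpow hUsize
  obtain ⟨v, hv⟩ := big_fiber (Cardinal.aleph0_le_lift.mpr hχ) hbig F hVle
  refine ⟨{a | a ∈ {α | α < NO ∧ fb α ≤ βs} ∧ F a = v}, v.1, ?_, hv, ?_⟩
  · intro a ha
    exact ha.1.1
  · have main : ∀ {a b}, a ∈ {a | a ∈ {α | α < NO ∧ fb α ≤ βs} ∧ F a = v} →
        b ∈ {a | a ∈ {α | α < NO ∧ fb α ≤ βs} ∧ F a = v} → a < b → G a ∩ G b = v.1 := by
      intro a b ha hb hab
      have hFa : G a ∩ Ustar = v.1 := congrArg Subtype.val ha.2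
      have hFb : G b ∩ Ustar = v.1 := congrArg Subtype.val hb.2
      apply Set.Subset.antisymm
      · intro x hx
        have hbNO : b < NO := hb.1.1
        have hx' : x ∈ P b := ⟨hx.2, mem_iUnion₂.mpr ⟨a, hab, hx.1⟩⟩
        have h1 : birth x + 1 ≤ fb b := hfb_ge (le_of_lt hbNO) hx'
        have h3 : birth x < βs := by
          rw [Ordinal.add_one_eq_succ, Order.succ_le_iff] at h1
          exact lt_of_lt_of_le h1 hb.1.2
        have h4 : x ∈ G (birth x) := (hbirth hbNO hx.2).2.1
        have h5 : x ∈ Ustar := mem_iUnion₂.mpr ⟨birth x, h3, h4⟩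
        rw [← hFa]
        exact ⟨hx.1, h5⟩
      · intro x hx
        constructor
        · rw [← hFa] at hx; exact hx.1
        · rw [← hFb] at hx; exact hx.1
    intro α hα β hβ hne
    rcases hne.lt_or_gt with h | h
    · exact main hα hβ h
    · rw [Set.inter_comm]; exact main hβ hα h

lemma theta_spec (lam : Cardinal.{0}) (K : Set Cardinal.{0}) (κ : Cardinal.{0}) :
    (theta lam K κ).IsRegular ∧ ∀ c ∈ K ∩ Set.Iio κ, c ≤ theta lam K κ := by
  have hbdd : BddAbove ((K ∩ Set.Iio κ) ∪ {lam}) := by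
    refine ⟨max κ lam, ?_⟩
    rintro c (⟨hc1, hc2⟩ | hc)
    · exact le_trans (le_of_lt hc2) (le_max_left _ _)
    · rw [mem_singleton_iff] at hc
      rw [hc]
      exact le_max_right _ _
  have hne : {θ : Cardinal | θ.IsRegular ∧ sSup ((K ∩ Set.Iio κ) ∪ {lam}) ≤ θ}.Nonempty := by
    refine ⟨Order.succ (max (sSup ((K ∩ Set.Iio κ) ∪ {lam})) ℵ₀), ?_, ?_⟩
    · exact Cardinal.isRegular_succ (le_max_right _ _)
    · exact le_trans (le_max_left _ _) (le_of_lt (Order.lt_succ _))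
  have hmem : theta lam K κ ∈
      {θ : Cardinal | θ.IsRegular ∧ sSup ((K ∩ Set.Iio κ) ∪ {lam}) ≤ θ} := csInf_mem hne
  refine ⟨hmem.1, fun c hc => le_trans ?_ hmem.2⟩
  exact le_csSup hbdd (Or.inl hc)

lemma mem_Ecl_self (κ : Cardinal) (i : Ordinal) : i ∈ Ecl κ i := rfl

lemma Ecl_eq_of_mem {κ : Cardinal} {i j : Ordinal} (h : j ∈ Ecl κ i) : Ecl κ j = Ecl κ i := by
  ext z
  simp only [Ecl, mem_setOf_eq] at *
  rw [h]

lemma ord_add_absorp {b : Cardinal.{0}} (hb : ℵ₀ ≤ b) {x : Ordinal} (hx : x < b.ord) :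
    x + b.ord = b.ord := by
  apply le_antisymm
  · rw [Ordinal.add_le_iff_of_isSuccLimit (Cardinal.isSuccLimit_ord hb)]
    intro γ hγ
    have h : (x + γ).card < b := by
      rw [Ordinal.card_add]
      exact Cardinal.add_lt_of_lt hb (Cardinal.lt_ord.mp hx) (Cardinal.lt_ord.mp hγ)
    exact le_of_lt (Cardinal.lt_ord.mpr h)
  · exact le_add_self

lemma Ecl_mono {c₁ c₂ : Cardinal.{0}} (h2 : ℵ₀ ≤ c₂) (h : c₁ ≤ c₂) (i : Ordinal) :
    Ecl c₁ i ⊆ Ecl c₂ i := by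
  rcases eq_or_lt_of_le h with rfl | hlt
  · exact subset_rfl
  · intro j hj
    have habs : c₁.ord + c₂.ord = c₂.ord := ord_add_absorp h2 (Cardinal.ord_lt_ord.mpr hlt)
    show j + c₂.ord = i + c₂.ord
    have hj' : j + c₁.ord = i + c₁.ord := hj
    calc j + c₂.ord = j + (c₁.ord + c₂.ord) := by rw [habs]
      _ = (j + c₁.ord) + c₂.ord := by rw [add_assoc]
      _ = (i + c₁.ord) + c₂.ord := by rw [hj']
      _ = i + (c₁.ord + c₂.ord) := by rw [add_assoc]
      _ = i + c₂.ord := by rw [habs]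

lemma Ecl_card_le {c : Cardinal.{0}} (hc : ℵ₀ ≤ c) (i : Ordinal) :
    #↥(Ecl c i) ≤ Cardinal.lift.{1} c := by
  set m := sInf (Ecl c i) with hm
  have hmmem : m ∈ Ecl c i := csInf_mem ⟨i, mem_Ecl_self c i⟩
  have hbound : ∀ y ∈ Ecl c i, y < m + c.ord := by
    intro y hy
    by_contra hge
    push_neg at hge
    have h1 : y + c.ord = m + c.ord := by
      have hy' : y + c.ord = i + c.ord := hy
      have hm' : m + c.ord = i + c.ord := hmmem
      rw [hy', hm']
    have h2 : y ≤ m + c.ord := by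
      rw [← h1]
      exact le_self_add
    have h3 : y = m + c.ord := le_antisymm h2 hge
    have h4 : y + c.ord = y := by rw [h1, ← h3]
    have h5 : c.ord = 0 := by
      have : y + c.ord = y + 0 := by rw [add_zero]; exact h4
      exact add_left_cancel this
    have : c = 0 := by
      have := congrArg Ordinal.card h5
      simpa [Cardinal.card_ord] using this
    rw [this] at hc
    exact Cardinal.aleph0_ne_zero (le_antisymm hc zero_le)
  have hinj : ∃ f : ↥(Ecl c i) → ↥(Iio c.ord), Function.Injective f := by
    refine ⟨fun y => ⟨y.1 - m, ?_⟩, ?_⟩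
    · have hle : m ≤ y.1 := csInf_le (OrderBot.bddBelow _) y.2
      rw [mem_Iio]
      have heq : m + (y.1 - m) = y.1 := Ordinal.add_sub_cancel_of_le hle
      have hlt : m + (y.1 - m) < m + c.ord := by
        rw [heq]
        exact hbound y.1 y.2
      exact lt_of_add_lt_add_left hlt
    · intro y₁ y₂ h
      simp only [Subtype.mk.injEq] at h
      have h1 : m + (y₁.1 - m) = m + (y₂.1 - m) := by rw [h]
      rw [Ordinal.add_sub_cancel_of_le (csInf_le (OrderBot.bddBelow _) y₁.2),
        Ordinal.add_sub_cancel_of_le (csInf_le (OrderBot.bddBelow _) y₂.2)] at h1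
      exact Subtype.ext h1
  obtain ⟨f, hf⟩ := hinj
  calc #↥(Ecl c i) ≤ #↥(Iio c.ord) := Cardinal.mk_le_of_injective hf
    _ = Cardinal.lift.{1} c := by rw [Ordinal.mk_Iio_ordinal, Cardinal.card_ord]

lemma mem_EclLt_self (K : Set Cardinal) (κ : Cardinal) (i : Ordinal) : i ∈ EclLt K κ i :=
  Or.inl rfl

lemma EclLt_symm {K : Set Cardinal} {κ : Cardinal} {i j : Ordinal}
    (h : j ∈ EclLt K κ i) : i ∈ EclLt K κ j := by
  rcases h with h | h
  · rw [mem_singleton_iff] at h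
    subst h
    exact mem_EclLt_self K κ j
  · rw [mem_iUnion₂] at h
    obtain ⟨c, hc, hj⟩ := h
    exact Or.inr (mem_iUnion₂.mpr ⟨c, hc, by
      show i + c.ord = j + c.ord
      exact hj.symm⟩)

lemma EclLt_trans {K : Set Cardinal.{0}} {κ : Cardinal} (hK : ∀ c ∈ K, ℵ₀ ≤ c)
    {i j k : Ordinal} (hj : j ∈ EclLt K κ i) (hk : k ∈ EclLt K κ j) : k ∈ EclLt K κ i := by
  rcases hj with hj | hj
  · rw [mem_singleton_iff] at hj
    rwa [hj] at hk
  · rcases hk with hk | hk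
    · rw [mem_singleton_iff] at hk
      rw [hk]
      exact Or.inr hj
    · rw [mem_iUnion₂] at hj hk
      obtain ⟨c₁, hc₁, hj⟩ := hj
      obtain ⟨c₂, hc₂, hk⟩ := hk
      rcases le_total c₁ c₂ with hle | hle
      · have hj2 : j ∈ Ecl c₂ i := Ecl_mono (hK c₂ hc₂.1) hle i hj
        refine Or.inr (mem_iUnion₂.mpr ⟨c₂, hc₂, ?_⟩)
        rw [Ecl_eq_of_mem hj2] at hk
        exact hk
      · have hk1 : k ∈ Ecl c₁ j := Ecl_mono (hK c₁ hc₁.1) hle j hk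
        refine Or.inr (mem_iUnion₂.mpr ⟨c₁, hc₁, ?_⟩)
        rw [Ecl_eq_of_mem hj] at hk1
        exact hk1

lemma EclLt_eq_of_mem {K : Set Cardinal.{0}} {κ : Cardinal} (hK : ∀ c ∈ K, ℵ₀ ≤ c)
    {i j : Ordinal} (h : j ∈ EclLt K κ i) : EclLt K κ j = EclLt K κ i := by
  ext z
  constructor
  · intro hz
    exact EclLt_trans hK h hz
  · intro hz
    exact EclLt_trans hK (EclLt_symm h) hz

lemma EclLt_card_le {K : Set Cardinal.{0}} {κ : Cardinal} {θ : Cardinal.{0}} (hθ : ℵ₀ ≤ θ)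
    (hK : ∀ c ∈ K, ℵ₀ ≤ c) (hKθ : ∀ c ∈ K ∩ Set.Iio κ, c ≤ θ) (i : Ordinal) :
    #↥(EclLt K κ i) ≤ Cardinal.lift.{1} θ := by
  have hidx : #↥(K ∩ Set.Iio κ) ≤ Cardinal.lift.{1} θ := by
    have hinj : Function.Injective (fun c : ↥(K ∩ Set.Iio κ) =>
        (⟨c.1.ord, by
          rw [mem_Iio, Order.lt_succ_iff]
          exact Cardinal.ord_le_ord.mpr (hKθ c.1 c.2)⟩ : ↥(Iio (Order.succ θ.ord)))) := by
      intro c₁ c₂ h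
      simp only [Subtype.mk.injEq] at h
      exact Subtype.ext (Cardinal.ord_injective h)
    refine le_trans (Cardinal.mk_le_of_injective hinj) ?_
    rw [Ordinal.mk_Iio_ordinal, Ordinal.card_succ, Cardinal.card_ord, Cardinal.add_one_eq hθ]
  have h1 : #↥(⋃ c ∈ K ∩ Set.Iio κ, Ecl c i) ≤ Cardinal.lift.{1} θ := by
    refine le_trans (biUnion_card_le' (c := Cardinal.lift.{1} θ) (M := Cardinal.lift.{1} θ)
      hidx ?_) ?_
    · intro c hc
      exact le_trans (Ecl_card_le (hK c hc.1) i) (Cardinal.lift_le.mpr (hKθ c hc))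
    · rw [Cardinal.mul_eq_self (Cardinal.aleph0_le_lift.mpr hθ)]
  calc #↥(EclLt K κ i) ≤ #↥({i} : Set Ordinal) + #↥(⋃ c ∈ K ∩ Set.Iio κ, Ecl c i) :=
        Cardinal.mk_union_le _ _
    _ ≤ 1 + Cardinal.lift.{1} θ := by
        refine add_le_add ?_ h1
        simp
    _ ≤ Cardinal.lift.{1} θ + Cardinal.lift.{1} θ := by
        refine add_le_add ?_ le_rfl
        exact le_trans Cardinal.one_le_aleph0 (Cardinal.aleph0_le_lift.mpr hθ)
    _ = Cardinal.lift.{1} θ := Cardinal.add_eq_self (Cardinal.aleph0_le_lift.mpr hθ)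

/-- antichain bound along pure increasing sequences: if
`(2^{<θ_κ})⁺ ≤ κ`, `(s_i : i < i*)` is `≤pr_κ`-increasing, `s_i ≤apr_κ t_i`, and the
`t_i` are pairwise incompatible in `Q`, then `i* < (2^{<θ_κ})⁺`. -/
theorem stmt16 (lam mu : Cardinal) (K : Set Cardinal) (hctx : GroundCtx lam mu K)
    (κ : Cardinal) (hκ : κ ∈ K) (hcc : Order.succ (2 ^< theta lam K κ) ≤ κ)
    (istar : Ordinal) (s t : Ordinal → Cond)
    (hsQ : ∀ i < istar, inQ lam mu K (s i)) (htQ : ∀ i < istar, inQ lam mu K (t i))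
    (hmono : ∀ i j : Ordinal, i ≤ j → j < istar → condLePr lam mu K κ (s i) (s j))
    (hst : ∀ i < istar, condLeApr lam mu K κ (s i) (t i))
    (hinc : ∀ i j : Ordinal, i < istar → j < istar → i ≠ j →
      ¬ compatQ lam mu K (t i) (t j)) :
    istar < (Order.succ (2 ^< theta lam K κ)).ord := by
  classical
  obtain ⟨hlamreg, _, hmureg, _, hKreg, hlamK, hmuK⟩ := hctx
  have hKinf : ∀ c ∈ K, ℵ₀ ≤ c := fun c hc => (hKreg c hc).1.1
  have hκinf : ℵ₀ ≤ κ := hKinf κ hκ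
  obtain ⟨hθreg, hKθ⟩ := theta_spec lam K κ
  set θ0 := theta lam K κ with hθ0def
  have hθinf : ℵ₀ ≤ θ0 := hθreg.1
  set χ := 2 ^< θ0 with hχdef
  have hθχ : θ0 ≤ χ := le_of_forall_lt
    (fun c hc => lt_of_lt_of_le (Cardinal.cantor c) (Cardinal.le_powerlt 2 hc))
  have hχinf : ℵ₀ ≤ χ := le_trans hθinf hθχ
  have hχ1 : (1 : Cardinal.{1}) ≤ Cardinal.lift.{1} χ := by
    refine le_trans ?_ (Cardinal.lift_le.mpr hχinf)
    simp
  have hpow : ∀ ν < θ0, χ ^ ν ≤ χ := fun ν hν => chi_pow_le hθreg hν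
  by_contra hcon
  push_neg at hcon
  set NO := (Order.succ χ).ord with hNOdef
  have hlt_istar : ∀ {α : Ordinal}, α < NO → α < istar := fun hα => lt_of_lt_of_le hα hcon
  -- basic structural facts
  have hXY : ∀ {α : Ordinal}, α < istar → cdom (s α) ⊆ cdom (t α) := by
    intro α hα ξ hξ
    rw [cdom, mem_setOf_eq, Option.isSome_iff_exists] at hξ ⊢
    obtain ⟨b, hb⟩ := hξ
    exact ⟨b, (hst α hα).1.1 ξ b hb⟩
  have hXmono : ∀ {α β : Ordinal}, α ≤ β → β < istar → cdom (s α) ⊆ cdom (s β) := by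
    intro α β hle hβ ξ hξ
    rw [cdom, mem_setOf_eq, Option.isSome_iff_exists] at hξ ⊢
    obtain ⟨b, hb⟩ := hξ
    exact ⟨b, (hmono α β hle hβ).1.1 ξ b hb⟩
  have hapr : ∀ {α : Ordinal}, α < istar → ∀ {ξ}, ξ ∈ cdom (t α) →
      (Ecl κ ξ ∩ cdom (s α)).Nonempty := by
    intro α hα ξ hξ
    exact (hst α hα).2 ξ hξ
  have hpureEq : ∀ {α β : Ordinal}, α ≤ β → β < istar → ∀ ξ,
      (Ecl κ ξ ∩ cdom (s α)).Nonempty →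
      Ecl κ ξ ∩ cdom (s α) = Ecl κ ξ ∩ cdom (s β) := by
    intro α β hle hβ ξ hne
    have h := (hmono α β hle hβ).2 ξ
    rw [grows] at h
    push_neg at h
    exact h hne
  set D : Ordinal → Set Ordinal := fun α => cdom (t α) \ cdom (s α) with hDdef
  have hDnotinX : ∀ {α β : Ordinal}, α ≤ β → β < istar → ∀ {ξ}, ξ ∈ D α →
      ξ ∉ cdom (s β) := by
    intro α β hle hβ ξ hξ hmem
    have hα : α < istar := lt_of_le_of_lt hle hβ
    have hne : (Ecl κ ξ ∩ cdom (s α)).Nonempty := hapr hα hξ.1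
    have heq := hpureEq hle hβ ξ hne
    have hx : ξ ∈ Ecl κ ξ ∩ cdom (s β) := ⟨mem_Ecl_self κ ξ, hmem⟩
    rw [← heq] at hx
    exact hξ.2 hx.2
  have hDsize : ∀ {α : Ordinal}, α < istar → #↥(D α) < Cardinal.lift.{1} θ0 := by
    intro α hα
    have hGC : #↥(growClasses mu κ (cdom (s α)) (cdom (t α))) < Cardinal.lift.{1} θ0 :=
      (hst α hα).1.2 κ hκ
    have hsub : D α ⊆ ⋃ A ∈ growClasses mu κ (cdom (s α)) (cdom (t α)), (A ∩ cdom (t α)) := by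
      intro x hx
      have hxmu : x < mu.ord := (htQ α hα).1 hx.1
      refine mem_iUnion₂.mpr ⟨Ecl κ x, ⟨⟨x, hxmu, rfl⟩, hapr hα hx.1, ?_⟩,
        mem_Ecl_self κ x, hx.1⟩
      intro heq
      apply hx.2
      have h : x ∈ Ecl κ x ∩ cdom (s α) := by
        rw [heq]
        exact ⟨mem_Ecl_self κ x, hx.1⟩
      exact h.2
    refine lt_of_le_of_lt (Cardinal.mk_le_mk_of_subset hsub) ?_
    refine lt_of_le_of_lt (Cardinal.mk_biUnion_le _ _) ?_
    refine Cardinal.mul_lt_of_lt (Cardinal.aleph0_le_lift.mpr hθinf) hGC ?_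
    refine Cardinal.iSup_lt_lift_of_isRegular.{1,0} (isRegular_lift hθreg) ?_ ?_
    · rw [Cardinal.lift_uzero]
      exact hGC
    · rintro ⟨A, ⟨a, ha, rfl⟩, hg⟩
      exact (htQ α hα).2 a ha κ hκ
  set mb : Ordinal → Ordinal := fun x => sInf (EclLt K κ x) with hmbdef
  set DD : Ordinal → Set Ordinal := fun α => if α < NO then D α else ∅ with hDDdef
  have hDDsize : ∀ α, #↥(DD α) < Cardinal.lift.{1} θ0 := by
    intro α
    by_cases hα : α < NO
    · have h : DD α = D α := if_pos hα
      rw [h]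
      exact hDsize (hlt_istar hα)
    · have h : DD α = ∅ := if_neg hα
      rw [h, Cardinal.mk_emptyCollection]
      exact lt_of_lt_of_le Cardinal.aleph0_pos (Cardinal.aleph0_le_lift.mpr hθinf)
  set G : Ordinal → Set Ordinal := fun α => DD α ∪ mb '' DD α with hGdef
  have hGsize : ∀ α, #↥(G α) < Cardinal.lift.{1} θ0 := by
    intro α
    refine lt_of_le_of_lt (Cardinal.mk_union_le _ _) ?_
    exact Cardinal.add_lt_of_lt (Cardinal.aleph0_le_lift.mpr hθinf) (hDDsize α)
      (lt_of_le_of_lt Cardinal.mk_image_le (hDDsize α))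
  obtain ⟨T1, R, hT1sub, hT1big, hroot⟩ := delta_system hθreg hθχ hχinf hpow G hGsize
  have hRsize : #↥R < Cardinal.lift.{1} θ0 := by
    obtain ⟨a, ha, b, hb, hab⟩ := two_elements hχ1 hT1big
    have h := hroot a ha b hb (ne_of_lt hab)
    rw [← h]
    exact lt_of_le_of_lt (Cardinal.mk_le_mk_of_subset inter_subset_left) (hGsize a)
  set B := ⋃ u ∈ R, EclLt K κ u with hBdef
  have hBsize : #↥B ≤ Cardinal.lift.{1} χ := by
    refine le_trans (biUnion_card_le (A := fun u => EclLt K κ u) (s := R)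
      (c := Cardinal.lift.{1} θ0) (M := Cardinal.lift.{1} θ0) (le_of_lt hRsize) ?_) ?_
    · intro u _
      exact EclLt_card_le hθinf hKinf (fun c hc => hKθ c hc) u
    · rw [Cardinal.mul_eq_self (Cardinal.aleph0_le_lift.mpr hθinf)]
      exact Cardinal.lift_le.mpr hθχ
  -- first pigeonhole : traces on B
  set F2 : Ordinal → {T : Set Ordinal // T ⊆ B ∧ #↥T < Cardinal.lift.{1} θ0} :=
    fun α => ⟨DD α ∩ B, inter_subset_right,
      lt_of_le_of_lt (Cardinal.mk_le_mk_of_subset inter_subset_left) (hDDsize α)⟩ with hF2def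
  obtain ⟨v2, hv2⟩ := big_fiber (Cardinal.aleph0_le_lift.mpr hχinf) hT1big F2
    (count_small hθreg hθχ hχinf hpow hBsize)
  set T2 := {a | a ∈ T1 ∧ F2 a = v2} with hT2def
  -- second pigeonhole : values on R
  set F3 : Ordinal → (↥R → Option Bool) :=
    fun α u => if (u : Ordinal) ∈ DD α then t α u else none with hF3def
  have hV3 : #(↥R → Option Bool) ≤ Cardinal.lift.{1} χ := by
    obtain ⟨c, hcθ, hlc⟩ := Cardinal.lt_lift_iff.mp hRsize
    have h1 : #(↥R → Option Bool) =
        Cardinal.lift.{1} #(Option Bool) ^ Cardinal.lift.{0} #↥R := Cardinal.mk_arrow _ _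
    have h2 : #(Option Bool) = ((3:ℕ) : Cardinal.{0}) := by
      simp [Cardinal.mk_option, Cardinal.mk_bool]
    rw [h1, Cardinal.lift_uzero, ← hlc, h2, ← Cardinal.lift_power]
    refine Cardinal.lift_le.mpr ?_
    calc ((3:ℕ) : Cardinal.{0}) ^ c ≤ χ ^ c :=
          Cardinal.power_le_power_right (le_trans (le_of_lt (Cardinal.nat_lt_aleph0 3)) hχinf)
      _ ≤ χ := hpow c hcθ
  obtain ⟨v3, hv3⟩ := big_fiber (Cardinal.aleph0_le_lift.mpr hχinf) hv2 F3 hV3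
  set T3 := {a | a ∈ T2 ∧ F3 a = v3} with hT3def
  obtain ⟨i, hiT3, j, hjT3, hij⟩ := two_elements hχ1 hv3
  have hiT1 : i ∈ T1 := hiT3.1.1
  have hjT1 : j ∈ T1 := hjT3.1.1
  have hiNO : i < NO := hT1sub hiT1
  have hjNO : j < NO := hT1sub hjT1
  have hii : i < istar := hlt_istar hiNO
  have hji : j < istar := hlt_istar hjNO
  have hijne : i ≠ j := ne_of_lt hij
  have hDDi : DD i = D i := if_pos hiNO
  have hDDj : DD j = D j := if_pos hjNO
  have hGiGj : G i ∩ G j = R := hroot i hiT1 j hjT1 hijne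
  have hDij : D i ∩ D j ⊆ R := by
    intro x hx
    rw [← hGiGj]
    constructor
    · exact Or.inl (by rw [hDDi]; exact hx.1)
    · exact Or.inl (by rw [hDDj]; exact hx.2)
  have htrace : DD i ∩ B = DD j ∩ B := by
    have h1 : F2 i = v2 := hiT3.1.2
    have h2 : F2 j = v2 := hjT3.1.2
    have := congrArg Subtype.val (h1.trans h2.symm)
    exact this
  have hvals : ∀ u : ↥R, (if (u : Ordinal) ∈ DD i then t i u else none)
      = (if (u : Ordinal) ∈ DD j then t j u else none) := by
    intro u
    have h1 : F3 i = v3 := hiT3.2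
    have h2 : F3 j = v3 := hjT3.2
    have := congrFun (h1.trans h2.symm) u
    exact this
  -- the cross lemma
  have cross : ∀ {a b : Ordinal}, a ∈ T3 → b ∈ T3 → a ≠ b →
      ∀ {c x y}, c ∈ K → c < κ → x ∈ D a → y ∈ D b → y ∈ Ecl c x → x ∈ D b := by
    intro a b haT hbT hab c x y hcK hcκ hxa hyb hyc
    have haT1 : a ∈ T1 := haT.1.1
    have hbT1 : b ∈ T1 := hbT.1.1
    have haNO : a < NO := hT1sub haT1
    have hbNO : b < NO := hT1sub hbT1
    have hDDa : DD a = D a := if_pos haNO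
    have hDDb : DD b = D b := if_pos hbNO
    have hyblock : y ∈ EclLt K κ x := Or.inr (mem_iUnion₂.mpr ⟨c, ⟨hcK, hcκ⟩, hyc⟩)
    have hblockeq : EclLt K κ y = EclLt K κ x := EclLt_eq_of_mem hKinf hyblock
    have hmbeq : mb x = mb y := by
      show sInf (EclLt K κ x) = sInf (EclLt K κ y)
      rw [hblockeq]
    have hmbGa : mb x ∈ G a := Or.inr ⟨x, by rw [hDDa]; exact hxa, rfl⟩
    have hmbGb : mb x ∈ G b := by
      rw [hmbeq]
      exact Or.inr ⟨y, by rw [hDDb]; exact hyb, rfl⟩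
    have hmbR : mb x ∈ G a ∩ G b := ⟨hmbGa, hmbGb⟩
    rw [hroot a haT1 b hbT1 hab] at hmbR
    have hxblock : x ∈ EclLt K κ (mb x) :=
      EclLt_symm (csInf_mem ⟨x, mem_EclLt_self K κ x⟩)
    have hxB : x ∈ B := mem_iUnion₂.mpr ⟨mb x, hmbR, hxblock⟩
    have hxDD : x ∈ DD a ∩ B := ⟨by rw [hDDa]; exact hxa, hxB⟩
    have htr : DD a ∩ B = DD b ∩ B := by
      have h1 : F2 a = v2 := haT.1.2
      have h2 : F2 b = v2 := hbT.1.2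
      exact congrArg Subtype.val (h1.trans h2.symm)
    rw [htr] at hxDD
    rw [hDDb] at hxDD
    exact hxDD.1
  -- agreement of t i and t j on common domain
  have agree : ∀ {ξ}, ξ ∈ cdom (t i) → ξ ∈ cdom (t j) → t i ξ = t j ξ := by
    intro ξ hξi hξj
    by_cases hX : ξ ∈ cdom (s i)
    · obtain ⟨b, hb⟩ := Option.isSome_iff_exists.mp hX
      have h1 : t i ξ = some b := (hst i hii).1.1 ξ b hb
      have h2 : s j ξ = some b := (hmono i j (le_of_lt hij) hji).1.1 ξ b hb
      have h3 : t j ξ = some b := (hst j hji).1.1 ξ b h2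
      rw [h1, h3]
    · have hDi : ξ ∈ D i := ⟨hξi, hX⟩
      have hXj : ξ ∉ cdom (s j) := hDnotinX (le_of_lt hij) hji hDi
      have hDj : ξ ∈ D j := ⟨hξj, hXj⟩
      have hR : ξ ∈ R := hDij ⟨hDi, hDj⟩
      have h := hvals ⟨ξ, hR⟩
      rw [if_pos (by rw [hDDi]; exact hDi), if_pos (by rw [hDDj]; exact hDj)] at h
      exact h
  -- the candidate common extension
  set r : Cond := unionC (t i) (t j) with hrdef
  have hval_r : ∀ ξ, r ξ = Option.orElse (t i ξ) (fun _ => t j ξ) := fun ξ => rfl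
  have hmem_cdom : ∀ (q : Cond) ξ, ξ ∈ cdom q ↔ (q ξ).isSome = true := fun q ξ => Iff.rfl
  have hcdomr : cdom r = cdom (t i) ∪ cdom (t j) := by
    ext ξ
    rw [mem_union, hmem_cdom, hmem_cdom, hmem_cdom, hval_r]
    cases h : t i ξ with
    | none => simp
    | some b => simp
  have hfirst_i : ∀ ξ b, t i ξ = some b → r ξ = some b := by
    intro ξ b h
    rw [hval_r, h]
    rfl
  have hfirst_j : ∀ ξ b, t j ξ = some b → r ξ = some b := by
    intro ξ b h
    cases hti : t i ξ with
    | none => rw [hval_r, hti, h]; rfl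
    | some b' =>
      have hξi : ξ ∈ cdom (t i) := by rw [cdom, mem_setOf_eq, hti]; rfl
      have hξj : ξ ∈ cdom (t j) := by rw [cdom, mem_setOf_eq, h]; rfl
      have := agree hξi hξj
      rw [hti, h] at this
      rw [hval_r, hti, this]
      rfl
  have diff_elem : ∀ {A X Y : Set Ordinal}, X ⊆ Y → A ∩ X ≠ A ∩ Y →
      ∃ x ∈ A, x ∈ Y ∧ x ∉ X := by
    intro A X Y hXYs hne
    by_contra hno
    push_neg at hno
    apply hne
    apply Subset.antisymm (inter_subset_inter_right _ hXYs)
    rintro z ⟨hz1, hz2⟩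
    exact ⟨hz1, hno z hz1 hz2⟩
  have hXiYj : cdom (s i) ⊆ cdom (t j) :=
    subset_trans (hXmono (le_of_lt hij) hji) (hXY hji)
  -- inQ r
  have hinQr : inQ lam mu K r := by
    constructor
    · rw [hcdomr]
      exact union_subset (htQ i hii).1 (htQ j hji).1
    · intro a ha c hc
      have hsplit : Ecl c a ∩ cdom r = (Ecl c a ∩ cdom (t i)) ∪ (Ecl c a ∩ cdom (t j)) := by
        rw [hcdomr, inter_union_distrib_left]
      rw [hsplit]
      refine lt_of_le_of_lt (Cardinal.mk_union_le _ _) ?_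
      exact Cardinal.add_lt_of_lt
        (Cardinal.aleph0_le_lift.mpr (theta_spec lam K c).1.1)
        ((htQ i hii).2 a ha c hc) ((htQ j hji).2 a ha c hc)
  -- growth classes of t j → r
  have hcond_j : condLe lam mu K (t j) r := by
    refine ⟨hfirst_j, ?_⟩
    intro c hc
    have hcinf : ℵ₀ ≤ c := hKinf c hc
    have hsub : growClasses mu c (cdom (t j)) (cdom r) ⊆
        growClasses mu c (cdom (s i)) (cdom (t i)) := by
      rintro A ⟨⟨a, ha, rfl⟩, hne1, hne2⟩
      obtain ⟨x, hxA, hxr, hxj⟩ := diff_elem (by rw [hcdomr]; exact subset_union_right) hne2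
      rw [hcdomr] at hxr
      have hxi : x ∈ cdom (t i) := by
        rcases hxr with h | h
        · exact h
        · exact absurd h hxj
      have hxXi : x ∉ cdom (s i) := fun h => hxj (hXiYj h)
      have hxDi : x ∈ D i := ⟨hxi, hxXi⟩
      have hxmu : x < mu.ord := (htQ i hii).1 hxi
      have hAx : Ecl c x = Ecl c a := Ecl_eq_of_mem hxA
      refine ⟨⟨x, hxmu, hAx.symm⟩, ?_, ?_⟩
      · -- nonemptiness of Ecl c a ∩ cdom (s i)
        rcases lt_trichotomy c κ with hlt | heq | hgt
        · by_contra hemp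
          rw [not_nonempty_iff_eq_empty] at hemp
          have hBne : (Ecl κ x ∩ cdom (s i)).Nonempty := hapr hii hxi
          have hBeq : Ecl κ x ∩ cdom (s i) = Ecl κ x ∩ cdom (s j) :=
            hpureEq (le_of_lt hij) hji x hBne
          have hAXj : Ecl c a ∩ cdom (s j) = ∅ := by
            rw [eq_empty_iff_forall_notMem]
            rintro w ⟨hw1, hw2⟩
            have hw1' : w ∈ Ecl c x := by rw [hAx]; exact hw1
            have hw3 : w ∈ Ecl κ x := Ecl_mono hκinf (le_of_lt hlt) x hw1'
            have hw4 : w ∈ Ecl κ x ∩ cdom (s i) := by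
              rw [hBeq]; exact ⟨hw3, hw2⟩
            have : w ∈ Ecl c a ∩ cdom (s i) := ⟨hw1, hw4.2⟩
            rw [hemp] at this
            exact this
          obtain ⟨w, hw1, hw2⟩ := hne1
          have hwXj : w ∉ cdom (s j) := by
            intro hw
            have : w ∈ Ecl c a ∩ cdom (s j) := ⟨hw1, hw⟩
            rw [hAXj] at this
            exact this
          have hwDj : w ∈ D j := ⟨hw2, hwXj⟩
          have hwc : w ∈ Ecl c x := by rw [hAx]; exact hw1
          have : x ∈ D j := cross hiT3 hjT3 hijne hc hlt hxDi hwDj hwc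
          exact hxj this.1
        · obtain ⟨w, hw1, hw2⟩ := hapr hii hxi
          refine ⟨w, ?_, hw2⟩
          rw [← hAx, heq]
          exact hw1
        · obtain ⟨w, hw1, hw2⟩ := hapr hii hxi
          refine ⟨w, ?_, hw2⟩
          rw [← hAx]
          exact Ecl_mono hcinf (le_of_lt hgt) x hw1
      · intro heq
        have h : x ∈ Ecl c a ∩ cdom (t i) := ⟨hxA, hxi⟩
        rw [← heq] at h
        exact hxXi h.2
    refine lt_of_le_of_lt (Cardinal.mk_le_mk_of_subset hsub) ?_
    exact (hst i hii).1.2 c hc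
  -- growth classes of t i → r
  have hcond_i : condLe lam mu K (t i) r := by
    refine ⟨hfirst_i, ?_⟩
    intro c hc
    have hcinf : ℵ₀ ≤ c := hKinf c hc
    have hsub : growClasses mu c (cdom (t i)) (cdom r) ⊆
        growClasses mu c (cdom (s j)) (cdom (t j)) ∪
        growClasses mu c (cdom (s i)) (cdom (s j)) := by
      rintro A ⟨⟨a, ha, rfl⟩, hne1, hne2⟩
      obtain ⟨y, hyA, hyr, hyi⟩ := diff_elem (by rw [hcdomr]; exact subset_union_left) hne2
      rw [hcdomr] at hyr
      have hyj : y ∈ cdom (t j) := by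
        rcases hyr with h | h
        · exact absurd h hyi
        · exact h
      obtain ⟨z, hzA, hzi⟩ := hne1
      have hymu : y < mu.ord := (htQ j hji).1 hyj
      have hAy : Ecl c y = Ecl c a := Ecl_eq_of_mem hyA
      by_cases hyXj : y ∈ cdom (s j)
      · -- A grows from s i to s j
        have hyXi : y ∉ cdom (s i) := fun h => hyi (hXY hii h)
        refine Or.inr ⟨⟨y, hymu, hAy.symm⟩, ?_, ?_⟩
        · by_cases hzX : z ∈ cdom (s i)
          · exact ⟨z, hzA, hzX⟩
          · have hzDi : z ∈ D i := ⟨hzi, hzX⟩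
            rcases lt_trichotomy c κ with hlt | heq | hgt
            · -- impossible : y would be in cdom (s i)
              exfalso
              have hzy : Ecl c z = Ecl c a := Ecl_eq_of_mem hzA
              have hyz : y ∈ Ecl κ z := by
                refine Ecl_mono hκinf (le_of_lt hlt) z ?_
                rw [hzy]
                exact hyA
              have hBne : (Ecl κ z ∩ cdom (s i)).Nonempty := hapr hii hzi
              have hBeq := hpureEq (le_of_lt hij) hji z hBne
              have : y ∈ Ecl κ z ∩ cdom (s i) := by
                rw [hBeq]
                exact ⟨hyz, hyXj⟩
              exact hyXi this.2
            · obtain ⟨w, hw1, hw2⟩ := hapr hii hzi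
              have hzy : Ecl c z = Ecl c a := Ecl_eq_of_mem hzA
              refine ⟨w, ?_, hw2⟩
              rw [← hzy, heq]
              exact hw1
            · obtain ⟨w, hw1, hw2⟩ := hapr hii hzi
              have hzy : Ecl c z = Ecl c a := Ecl_eq_of_mem hzA
              refine ⟨w, ?_, hw2⟩
              rw [← hzy]
              exact Ecl_mono hcinf (le_of_lt hgt) z hw1
        · intro heq
          have h : y ∈ Ecl c a ∩ cdom (s j) := ⟨hyA, hyXj⟩
          rw [← heq] at h
          exact hyXi h.2
      · -- A grows from s j to t j
        have hyDj : y ∈ D j := ⟨hyj, hyXj⟩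
        refine Or.inl ⟨⟨y, hymu, hAy.symm⟩, ?_, ?_⟩
        · by_cases hzX : z ∈ cdom (s i)
          · exact ⟨z, hzA, hXmono (le_of_lt hij) hji hzX⟩
          · have hzDi : z ∈ D i := ⟨hzi, hzX⟩
            rcases lt_trichotomy c κ with hlt | heq | hgt
            · exfalso
              have hzy : z ∈ Ecl c y := by
                rw [hAy]
                exact hzA
              have : y ∈ D i := cross hjT3 hiT3 (Ne.symm hijne) hc hlt hyDj hzDi hzy
              exact hyi this.1
            · obtain ⟨w, hw1, hw2⟩ := hapr hji hyj
              refine ⟨w, ?_, hw2⟩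
              rw [← hAy, heq]
              exact hw1
            · obtain ⟨w, hw1, hw2⟩ := hapr hji hyj
              refine ⟨w, ?_, hw2⟩
              rw [← hAy]
              exact Ecl_mono hcinf (le_of_lt hgt) y hw1
        · intro heq
          have h : y ∈ Ecl c a ∩ cdom (t j) := ⟨hyA, hyj⟩
          rw [← heq] at h
          exact hyXj h.2
    refine lt_of_le_of_lt (Cardinal.mk_le_mk_of_subset hsub) ?_
    refine lt_of_le_of_lt (Cardinal.mk_union_le _ _) ?_
    exact Cardinal.add_lt_of_lt (Cardinal.aleph0_le_lift.mpr (theta_spec lam K c).1.1)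
      ((hst j hji).1.2 c hc) ((hmono i j (le_of_lt hij) hji).1.2 c hc)
  exact hinc i j hii hji hijne ⟨r, hinQr, hcond_i, hcond_j⟩
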